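/- Let (φ_λ)_{λ∈Λ}, with Λ finite, be an orthonormal basis of ℝ^n, let Y ∈ ℝ^n and let q_λ > 0 for each λ ∈ Λ. Then the soft-thresholding estimator β̂ = Σ_{λ∈Λ} η^soft(⟨φ_λ, Y⟩, q_λ) φ_λ is the unique solution of: minimize ‖β‖₂² over β ∈ ℝ^n subject to max_{λ∈Λ} |⟨φ_λ, Y − β⟩| / q_λ ≤ 1. -/

import Mathlib

/-- The soft-thresholding function `η^soft(x, q) = sign(x) · max(|x| − q, 0)`. -/
noncomputable def etaSoft (x q : ℝ) : ℝ := Real.sign x * max (|x| - q) 0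

lemma etaSoft_cases (y q : ℝ) (hq : 0 < q) :
    (q < y ∧ etaSoft y q = y - q) ∨ (y < -q ∧ etaSoft y q = y + q) ∨
    (|y| ≤ q ∧ etaSoft y q = 0) := by
  rcases le_or_gt (|y|) q with h | h
  · right; right
    exact ⟨h, by unfold etaSoft; rw [max_eq_right (by linarith)]; ring⟩
  · rcases lt_trichotomy y 0 with hy | hy | hy
    · right; left
      have ha : |y| = -y := abs_of_neg hy
      refine ⟨by linarith [ha ▸ h], ?_⟩
      unfold etaSoft
      rw [Real.sign_of_neg hy, ha, max_eq_left (by linarith)]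
      ring
    · rw [hy] at h; simp at h; linarith
    · left
      have ha : |y| = y := abs_of_pos hy
      refine ⟨by linarith [ha ▸ h], ?_⟩
      unfold etaSoft
      rw [Real.sign_of_pos hy, ha, max_eq_left (by linarith)]
      ring

lemma etaSoft_feasible (y q : ℝ) (hq : 0 < q) : |y - etaSoft y q| ≤ q := by
  rcases etaSoft_cases y q hq with ⟨h, e⟩ | ⟨h, e⟩ | ⟨h, e⟩ <;> rw [e] <;>
    [skip; skip; rw [abs_le] at h] <;> rw [abs_le] <;> constructor <;> linarith

lemma etaSoft_min (y q t : ℝ) (hq : 0 < q) (ht : |y - t| ≤ q) :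
    etaSoft y q ^ 2 ≤ t ^ 2 ∧ (t ≠ etaSoft y q → etaSoft y q ^ 2 < t ^ 2) := by
  rw [abs_le] at ht
  rcases etaSoft_cases y q hq with ⟨h, e⟩ | ⟨h, e⟩ | ⟨h, e⟩ <;> rw [e]
  · constructor
    · nlinarith [ht.1, ht.2]
    · intro hne
      have : y - q < t := lt_of_le_of_ne (by linarith [ht.1]) (Ne.symm hne)
      nlinarith
  · constructor
    · nlinarith [ht.1, ht.2]
    · intro hne
      have : t < y + q := lt_of_le_of_ne (by linarith [ht.2]) hne
      nlinarith
  · constructor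
    · simpa using sq_nonneg t
    · intro hne
      have := pow_pos (abs_pos.mpr hne) 2
      simpa [sq_abs] using this

lemma norm_sq_eq_sum_inner {n : ℕ} {Λ : Type*} [Fintype Λ]
    (φ : OrthonormalBasis Λ ℝ (EuclideanSpace ℝ (Fin n)))
    (v : EuclideanSpace ℝ (Fin n)) :
    ‖v‖ ^ 2 = ∑ l : Λ, (inner ℝ (φ l) v : ℝ) ^ 2 := by
  rw [← real_inner_self_eq_norm_sq, ← φ.sum_inner_mul_inner v v]
  congr 1; ext l; rw [real_inner_comm v (φ l)]; ring

/-- Variational characterization of wavelet soft-thresholding with the squared Euclidean norm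
as objective: given an orthonormal basis `(φ_λ)_{λ∈Λ}` of `ℝ^n`, data `Y` and thresholds
`q_λ > 0`, the estimator `β̂ = Σ_λ η^soft(⟨φ_λ, Y⟩, q_λ) φ_λ` is the unique solution of:
minimize `‖β‖₂²` subject to `max_λ |⟨φ_λ, Y − β⟩| / q_λ ≤ 1`. -/
theorem soft_thresholding_variational_l2 {n : ℕ} {Λ : Type*} [Fintype Λ]
    (φ : OrthonormalBasis Λ ℝ (EuclideanSpace ℝ (Fin n)))
    (Y : EuclideanSpace ℝ (Fin n)) (q : Λ → ℝ) (hq : ∀ l, 0 < q l)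
    (βhat : EuclideanSpace ℝ (Fin n))
    (hβhat : βhat = ∑ l : Λ, etaSoft (inner ℝ (φ l) Y : ℝ) (q l) • φ l) :
    (∀ l : Λ, |(inner ℝ (φ l) (Y - βhat) : ℝ)| / q l ≤ 1) ∧
    ∀ β : EuclideanSpace ℝ (Fin n),
      (∀ l : Λ, |(inner ℝ (φ l) (Y - β) : ℝ)| / q l ≤ 1) → β ≠ βhat →
      ‖βhat‖ ^ 2 < ‖β‖ ^ 2 := by
  have hsl : ∀ l : Λ, (inner ℝ (φ l) βhat : ℝ) = etaSoft (inner ℝ (φ l) Y : ℝ) (q l) := by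
    intro l
    rw [hβhat]
    exact φ.orthonormal.inner_right_fintype _ l
  constructor
  · intro l
    rw [div_le_one (hq l), inner_sub_right, hsl l]
    exact etaSoft_feasible _ _ (hq l)
  · intro β hfeas hne
    have hfeas' : ∀ l, |(inner ℝ (φ l) Y : ℝ) - (inner ℝ (φ l) β : ℝ)| ≤ q l := by
      intro l
      have := (div_le_one (hq l)).mp (hfeas l)
      rwa [inner_sub_right] at this
    rw [norm_sq_eq_sum_inner φ βhat, norm_sq_eq_sum_inner φ β]
    have hexists : ∃ l0 : Λ, (inner ℝ (φ l0) β : ℝ) ≠ (inner ℝ (φ l0) βhat : ℝ) := by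
      by_contra hc
      push_neg at hc
      apply hne
      apply φ.repr.injective
      ext l
      rw [φ.repr_apply_apply, φ.repr_apply_apply]
      exact hc l
    obtain ⟨l0, hl0⟩ := hexists
    refine Finset.sum_lt_sum (fun l _ => ?_) ⟨l0, Finset.mem_univ l0, ?_⟩
    · rw [hsl l]
      exact (etaSoft_min _ _ _ (hq l) (hfeas' l)).1
    · rw [hsl l0]
      exact (etaSoft_min _ _ _ (hq l0) (hfeas' l0)).2 (by rw [← hsl l0]; exact hl0)
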